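/- Let A be an n×n real symmetric positive definite matrix. Then for every n×n real matrix V with Tr(V) = 1, one has Tr(Vᵀ A V) ≥ 1 / Tr(A⁻¹), with equality achieved by V = A⁻¹ / Tr(A⁻¹). Consequently, the minimum of Tr(Vᵀ A V) over all matrices V with Tr(V) = 1 equals 1 / Tr(A⁻¹). -/

import Mathlib

open Matrix

lemma trace_form_nonneg {n : ℕ} {A : Matrix (Fin n) (Fin n) ℝ}
    (hA : A.PosSemidef) (W : Matrix (Fin n) (Fin n) ℝ) :
    0 ≤ (Wᵀ * A * W).trace := by
  rw [Matrix.trace]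
  refine Finset.sum_nonneg fun j _ => ?_
  have h := hA.dotProduct_mulVec_nonneg (fun i => W i j)
  refine le_trans h (le_of_eq ?_)
  simp only [Matrix.diag, Matrix.mul_apply, Matrix.mulVec, dotProduct,
    Finset.sum_mul, Finset.mul_sum, star_trivial, Matrix.transpose_apply]
  rw [Finset.sum_comm]
  exact Finset.sum_congr rfl fun x _ => Finset.sum_congr rfl fun k _ => by ring

lemma trace_pos_of_posDef {n : ℕ} (hn : 0 < n) {M : Matrix (Fin n) (Fin n) ℝ}
    (hM : M.PosDef) : 0 < M.trace := by
  rw [Matrix.trace]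
  refine Finset.sum_pos (fun i _ => ?_) ⟨⟨0, hn⟩, Finset.mem_univ _⟩
  simpa [Matrix.diag] using hM.diag_pos

/-- Variational reformulation: for symmetric positive definite `A`,
`Tr(Vᵀ A V) ≥ 1 / Tr(A⁻¹)` whenever `Tr V = 1`, with equality at
`V = A⁻¹ / Tr(A⁻¹)`, so the minimum equals `1 / Tr(A⁻¹)`. -/
theorem stmt0 {n : ℕ} (hn : 0 < n) (A : Matrix (Fin n) (Fin n) ℝ)
    (hA : A.PosDef) :
    (∀ V : Matrix (Fin n) (Fin n) ℝ, V.trace = 1 →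
      1 / (A⁻¹).trace ≤ (Vᵀ * A * V).trace) ∧
    ((((A⁻¹).trace)⁻¹ • A⁻¹).trace = 1) ∧
    (((((A⁻¹).trace)⁻¹ • A⁻¹)ᵀ * A * (((A⁻¹).trace)⁻¹ • A⁻¹)).trace
        = 1 / (A⁻¹).trace) ∧
    IsLeast { t : ℝ | ∃ V : Matrix (Fin n) (Fin n) ℝ,
        V.trace = 1 ∧ t = (Vᵀ * A * V).trace } (1 / (A⁻¹).trace) := by
  have hAinv : (A⁻¹).PosDef := hA.inv
  have htr : 0 < (A⁻¹).trace := trace_pos_of_posDef hn hAinv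
  set c : ℝ := ((A⁻¹).trace)⁻¹ with hc
  have hdet : IsUnit A.det := isUnit_iff_ne_zero.mpr hA.det_pos.ne'
  have hBA : A⁻¹ * A = 1 := Matrix.nonsing_inv_mul A hdet
  have hAB : A * A⁻¹ = 1 := Matrix.mul_nonsing_inv A hdet
  have hBt : (A⁻¹)ᵀ = A⁻¹ := by
    have := hAinv.1
    rw [Matrix.IsHermitian] at this
    simpa [Matrix.conjTranspose_eq_transpose_of_trivial] using this
  -- equality part
  have heq2 : (c • A⁻¹).trace = 1 := by
    rw [Matrix.trace_smul, smul_eq_mul, hc, inv_mul_cancel₀ htr.ne']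
  have heq3 : ((c • A⁻¹)ᵀ * A * (c • A⁻¹)).trace = 1 / (A⁻¹).trace := by
    rw [Matrix.transpose_smul, hBt]
    rw [Matrix.smul_mul, Matrix.smul_mul, Matrix.mul_smul, Matrix.mul_assoc, hAB,
      Matrix.mul_one]
    rw [Matrix.trace_smul, Matrix.trace_smul, smul_eq_mul, smul_eq_mul, hc]
    field_simp
  -- main inequality
  have hineq : ∀ V : Matrix (Fin n) (Fin n) ℝ, V.trace = 1 →
      1 / (A⁻¹).trace ≤ (Vᵀ * A * V).trace := by
    intro V hV
    have h0 : 0 ≤ ((V - c • A⁻¹)ᵀ * A * (V - c • A⁻¹)).trace :=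
      trace_form_nonneg hA.posSemidef _
    have e1 : (Vᵀ * A * A⁻¹).trace = 1 := by
      rw [Matrix.mul_assoc, hAB, Matrix.mul_one, Matrix.trace_transpose, hV]
    have e2 : ((A⁻¹)ᵀ * A * V).trace = 1 := by
      rw [hBt, hBA, Matrix.one_mul, hV]
    have e3 : ((A⁻¹)ᵀ * A * A⁻¹).trace = (A⁻¹).trace := by
      rw [hBt, hBA, Matrix.one_mul]
    have hexp : ((V - c • A⁻¹)ᵀ * A * (V - c • A⁻¹)).trace
        = (Vᵀ * A * V).trace - c * 1 - c * 1 + c * (c * (A⁻¹).trace) := by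
      simp only [Matrix.transpose_sub, Matrix.transpose_smul, Matrix.sub_mul,
        Matrix.mul_sub, Matrix.smul_mul, Matrix.mul_smul, Matrix.trace_sub,
        Matrix.trace_smul, smul_eq_mul, smul_smul]
      rw [e1, e2, e3]
      ring
    rw [hexp] at h0
    have hcc : c * (A⁻¹).trace = 1 := inv_mul_cancel₀ htr.ne'
    rw [hcc] at h0
    rw [one_div]
    linarith
  refine ⟨hineq, heq2, heq3, ⟨⟨c • A⁻¹, heq2, heq3.symm⟩, ?_⟩⟩
  rintro t ⟨V, hV, rfl⟩
  exact hineq V hV
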